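/- Given reals λ̂₁ ≥ λ̂₂ ≥ ⋯ ≥ λ̂ₖ and 0 < β̂₁ ≤ β̂₂ ≤ ⋯ ≤ β̂ₖ, the vector θ defined by θ_ℓ = β̂_ℓ for ℓ = 1,…,k is an optimal solution of the problem: minimize Σ_{ℓ=1}^k λ̂_ℓ θ_ℓ over θ ∈ ℝᵏ₊ with θ₁ ≤ ⋯ ≤ θₖ, subject to Σ_{ℓ=j+1}^k θ_ℓ ≤ Σ_{ℓ=j+1}^k β̂_ℓ for j = 1,…,k−1, and Σ_{ℓ=1}^k θ_ℓ = Σ_{ℓ=1}^k β̂_ℓ. -/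

import Mathlib

lemma abel_tail (k : ℕ) (g : ℕ → ℝ) (x : Fin k → ℝ) :
    ∑ ℓ : Fin k, g ℓ * x ℓ
      = g 0 * (∑ ℓ, x ℓ)
        + ∑ j ∈ Finset.range (k-1),
            (g (j+1) - g j) * (∑ ℓ : Fin k, if j+1 ≤ (ℓ:ℕ) then x ℓ else 0) := by
  have h1 : ∑ j ∈ Finset.range (k-1),
      (g (j+1) - g j) * (∑ ℓ : Fin k, if j+1 ≤ (ℓ:ℕ) then x ℓ else 0)
      = ∑ ℓ : Fin k, (g ℓ - g 0) * x ℓ := by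
    simp_rw [Finset.mul_sum, mul_ite, mul_zero]
    rw [Finset.sum_comm]
    refine Finset.sum_congr rfl fun ℓ _ => ?_
    have : ∀ j, (if j + 1 ≤ (ℓ:ℕ) then (g (j+1) - g j) * x ℓ else 0)
        = (if j < (ℓ:ℕ) then (g (j+1) - g j) * x ℓ else 0) := by
      intro j; congr 1
    simp_rw [this, Finset.sum_ite, Finset.sum_const_zero, add_zero]
    have hset : (Finset.range (k-1)).filter (fun j => j < (ℓ:ℕ)) = Finset.range ℓ := by
      ext j
      simp only [Finset.mem_filter, Finset.mem_range]
      have := ℓ.isLt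
      omega
    rw [hset, ← Finset.sum_mul, Finset.sum_range_sub]
  rw [h1, Finset.mul_sum, ← Finset.sum_add_distrib]
  refine Finset.sum_congr rfl fun ℓ _ => ?_
  ring

theorem stmt_2 (k : ℕ) (lam beta : Fin k → ℝ)
    (hlam : ∀ i j : Fin k, i ≤ j → lam j ≤ lam i)
    (hbpos : ∀ i, 0 < beta i)
    (hbmono : ∀ i j : Fin k, i ≤ j → beta i ≤ beta j) :
    ∀ θ : Fin k → ℝ,
      (∀ i, 0 ≤ θ i) →
      (∀ i j : Fin k, i ≤ j → θ i ≤ θ j) →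
      (∀ j : ℕ, 0 < j → j < k →
        (∑ ℓ : Fin k, if j ≤ (ℓ : ℕ) then θ ℓ else 0)
          ≤ ∑ ℓ : Fin k, if j ≤ (ℓ : ℕ) then beta ℓ else 0) →
      (∑ ℓ, θ ℓ) = (∑ ℓ, beta ℓ) →
      (∑ ℓ, lam ℓ * beta ℓ) ≤ ∑ ℓ, lam ℓ * θ ℓ := by
  intro θ hθ0 hθmono htail hsum
  rcases Nat.eq_zero_or_pos k with hk | hk
  · subst hk; simp
  set g : ℕ → ℝ := fun n => lam ⟨min n (k-1), by omega⟩ with hg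
  have hgl : ∀ ℓ : Fin k, g ℓ = lam ℓ := by
    intro ℓ
    have h : min (ℓ:ℕ) (k-1) = (ℓ:ℕ) := by have := ℓ.isLt; omega
    simp [hg, h]
  have h1 : ∑ ℓ, lam ℓ * beta ℓ = ∑ ℓ : Fin k, g ℓ * beta ℓ := by
    exact Finset.sum_congr rfl fun ℓ _ => by rw [hgl]
  have h2 : ∑ ℓ, lam ℓ * θ ℓ = ∑ ℓ : Fin k, g ℓ * θ ℓ := by
    exact Finset.sum_congr rfl fun ℓ _ => by rw [hgl]
  rw [h1, h2, abel_tail k g beta, abel_tail k g θ, hsum]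
  apply add_le_add le_rfl
  apply Finset.sum_le_sum
  intro j hj
  rw [Finset.mem_range] at hj
  have hd : g (j+1) - g j ≤ 0 := by
    have : lam ⟨min (j+1) (k-1), by omega⟩ ≤ lam ⟨min j (k-1), by omega⟩ := by
      apply hlam
      exact Fin.mk_le_mk.mpr (by omega)
    simpa [hg] using sub_nonpos.mpr this
  have hT := htail (j+1) (by omega) (by omega)
  exact mul_le_mul_of_nonpos_left hT hd
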